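/- arXiv:1903.01459 — 2 statements merged into one kernel-verified Lean document; each statement's English description precedes it below -/
import Mathlib

section
/- Within-group merging lemma for complete-linkage HAC under separation: Let n ≥ 1 be an integer, d : {1,…,n}² → ℝ symmetric, and let {G₁,…,G_{K₀}} be a partition of {1,…,n} into K₀ nonempty groups that is d-separated. Then, for every choice of tie-breaking at each step and for every step r with 1 ≤ r ≤ n − K₀, the two clusters merged at step r of the HAC algorithm are both subsets of one and the same group G_k; consequently, for every r with 0 ≤ r ≤ n − K₀, each cluster of the partition P^r is contained in some group G_k. -/
open Finset

/-- Complete-linkage dissimilarity `Δ(S,S') = max_{i ∈ S, j ∈ S'} d i j`, as an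
extended real (so that the value over an empty index set is `⊥`). -/
noncomputable def cLink {n : ℕ} (d : Fin n → Fin n → ℝ) (S S' : Finset (Fin n)) : EReal :=
  sSup {x : EReal | ∃ i ∈ S, ∃ j ∈ S', x = (d i j : EReal)}

/-- Within-cluster dissimilarity `Δ(C) = max_{i,j ∈ C, i ≠ j} d i j`, as an extended real;
for a singleton (or empty) cluster the value is `⊥`, which is smaller than every real. -/
noncomputable def cDiam {n : ℕ} (d : Fin n → Fin n → ℝ) (C : Finset (Fin n)) : EReal :=
  sSup {x : EReal | ∃ i ∈ C, ∃ j ∈ C, i ≠ j ∧ x = (d i j : EReal)}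

/-- The initial partition of `{1,…,n}` into `n` singleton clusters. -/
def singletonPartition (n : ℕ) : Finset (Finset (Fin n)) :=
  Finset.univ.image fun i : Fin n => ({i} : Finset (Fin n))

/-- `Q` is obtained from `P` by merging one pair of distinct clusters attaining the
minimum of the complete-linkage dissimilarity `Δ` over all pairs of distinct clusters. -/
def IsMergeStep {n : ℕ} (d : Fin n → Fin n → ℝ) (P Q : Finset (Finset (Fin n))) : Prop :=
  ∃ C ∈ P, ∃ C' ∈ P, C ≠ C' ∧
    (∀ D ∈ P, ∀ D' ∈ P, D ≠ D' → cLink d C C' ≤ cLink d D D') ∧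
    Q = insert (C ∪ C') ((P.erase C).erase C')

/-- A run of the complete-linkage HAC algorithm (with an arbitrary choice of
tie-breaking at each step): `P 0` is the singleton partition and for every
`r < n - 1`, `P (r+1)` is obtained from `P r` by a merge step. -/
def IsHACChain {n : ℕ} (d : Fin n → Fin n → ℝ) (P : ℕ → Finset (Finset (Fin n))) : Prop :=
  P 0 = singletonPartition n ∧ ∀ r, r < n - 1 → IsMergeStep d (P r) (P (r + 1))

/-- `G` is a partition of `{1,…,n}` into `K₀` nonempty groups. -/
def IsGroupPartition {n K₀ : ℕ} (G : Fin K₀ → Finset (Fin n)) : Prop :=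
  (∀ k, (G k).Nonempty) ∧ (∀ i : Fin n, ∃ k, i ∈ G k) ∧
    ∀ k k' : Fin K₀, k ≠ k' → Disjoint (G k) (G k')

/-- The partition `G` is `d`-separated: every within-group distance is strictly smaller
than every between-group distance (vacuously true when `K₀ = 1`). -/
def IsSeparated {n K₀ : ℕ} (d : Fin n → Fin n → ℝ) (G : Fin K₀ → Finset (Fin n)) : Prop :=
  ∀ k : Fin K₀, ∀ i ∈ G k, ∀ j ∈ G k, i ≠ j →
    ∀ k₁ k₂ : Fin K₀, k₁ ≠ k₂ → ∀ a ∈ G k₁, ∀ b ∈ G k₂, d i j < d a b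

/-- `A` is a refinement of `B`: every element of `A` is a subset of some element of `B`. -/
def IsRefinement {n : ℕ} (A B : Finset (Finset (Fin n))) : Prop :=
  ∀ C ∈ A, ∃ D ∈ B, C ⊆ D


lemma le_cLink {n : ℕ} (d : Fin n → Fin n → ℝ) {S S' : Finset (Fin n)}
    {i j : Fin n} (hi : i ∈ S) (hj : j ∈ S') :
    (d i j : EReal) ≤ cLink d S S' :=
  le_sSup ⟨i, hi, j, hj, rfl⟩

lemma cLink_mem {n : ℕ} (d : Fin n → Fin n → ℝ) {S S' : Finset (Fin n)}
    (hS : S.Nonempty) (hS' : S'.Nonempty) :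
    ∃ i ∈ S, ∃ j ∈ S', cLink d S S' = (d i j : EReal) := by
  have hfin : {x : EReal | ∃ i ∈ S, ∃ j ∈ S', x = (d i j : EReal)}.Finite := by
    apply Set.Finite.subset (Set.finite_range (fun p : Fin n × Fin n => (d p.1 p.2 : EReal)))
    rintro x ⟨i, hi, j, hj, rfl⟩
    exact ⟨(i, j), rfl⟩
  have hne : {x : EReal | ∃ i ∈ S, ∃ j ∈ S', x = (d i j : EReal)}.Nonempty := by
    obtain ⟨i, hi⟩ := hS; obtain ⟨j, hj⟩ := hS'
    exact ⟨(d i j : EReal), i, hi, j, hj, rfl⟩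
  exact hne.csSup_mem hfin

lemma cLink_lt_cLink {n K₀ : ℕ} (d : Fin n → Fin n → ℝ)
    {G : Fin K₀ → Finset (Fin n)} (hsep : IsSeparated d G)
    {D D' C C' : Finset (Fin n)} {k k₁ k₂ : Fin K₀}
    (hD : D ⊆ G k) (hD' : D' ⊆ G k) (hDne : D.Nonempty) (hD'ne : D'.Nonempty)
    (hdisj : Disjoint D D')
    (hC : C ⊆ G k₁) (hC' : C' ⊆ G k₂) (hk : k₁ ≠ k₂)
    (hCne : C.Nonempty) (hC'ne : C'.Nonempty) :
    cLink d D D' < cLink d C C' := by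
  obtain ⟨i, hi, j, hj, heq⟩ := cLink_mem d hDne hD'ne
  obtain ⟨a, ha⟩ := hCne
  obtain ⟨b, hb⟩ := hC'ne
  have hij : i ≠ j := by rintro rfl; exact Finset.disjoint_left.mp hdisj hi hj
  have hlt : d i j < d a b := hsep k i (hD hi) j (hD' hj) hij k₁ k₂ hk a (hC ha) b (hC' hb)
  calc cLink d D D' = (d i j : EReal) := heq
    _ < (d a b : EReal) := by exact_mod_cast hlt
    _ ≤ cLink d C C' := le_cLink d ha hb

/-- **Within-group merging lemma.** If the group partition is `d`-separated, then for every
tie-breaking: at every step `r` with `1 ≤ r ≤ n − K₀`, the two clusters merged at step `r`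
are both subsets of one and the same group `G k`; consequently, for every `r ≤ n − K₀`,
each cluster of the partition `P r` is contained in some group `G k`. -/
theorem hac_within_group_merging {n K₀ : ℕ} (hn : 1 ≤ n)
    (d : Fin n → Fin n → ℝ) (hsym : ∀ i j, d i j = d j i)
    (G : Fin K₀ → Finset (Fin n)) (hG : IsGroupPartition G)
    (hsep : IsSeparated d G)
    (P : ℕ → Finset (Finset (Fin n))) (hP : IsHACChain d P) :
    (∀ r, 1 ≤ r → r ≤ n - K₀ →
        ∀ C ∈ P (r - 1), ∀ C' ∈ P (r - 1), C ≠ C' →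
          P r = insert (C ∪ C') (((P (r - 1)).erase C).erase C') →
          ∃ k, C ⊆ G k ∧ C' ⊆ G k) ∧
      ∀ r, r ≤ n - K₀ → ∀ C ∈ P r, ∃ k, C ⊆ G k := by
  classical
  obtain ⟨hP0, hstep⟩ := hP
  obtain ⟨k₀, _⟩ := hG.2.1 ⟨0, hn⟩
  have hK₀ : 0 < K₀ := k₀.pos
  have key : ∀ r, r ≤ n - K₀ →
      (∀ C ∈ P r, C.Nonempty) ∧
      (∀ C ∈ P r, ∀ C' ∈ P r, C ≠ C' → Disjoint C C') ∧
      (P r).card = n - r ∧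
      (∀ C ∈ P r, ∃ k, C ⊆ G k) := by
    intro r
    induction r with
    | zero =>
      intro _
      rw [hP0]
      refine ⟨?_, ?_, ?_, ?_⟩
      · rintro C hC
        simp only [singletonPartition, mem_image, mem_univ, true_and] at hC
        obtain ⟨i, rfl⟩ := hC
        exact ⟨i, mem_singleton_self i⟩
      · rintro C hC C' hC' hne
        simp only [singletonPartition, mem_image, mem_univ, true_and] at hC hC'
        obtain ⟨i, rfl⟩ := hC
        obtain ⟨j, rfl⟩ := hC'
        have : i ≠ j := fun h => hne (by rw [h])
        simp [Finset.disjoint_singleton, this, this.symm]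
      · rw [singletonPartition,
          Finset.card_image_of_injective _ (fun a b h => Finset.singleton_injective h),
          card_univ, Fintype.card_fin]
        omega
      · rintro C hC
        simp only [singletonPartition, mem_image, mem_univ, true_and] at hC
        obtain ⟨i, rfl⟩ := hC
        obtain ⟨k, hk⟩ := hG.2.1 i
        exact ⟨k, by simpa using hk⟩
    | succ r ih =>
      intro hr
      have hrle : r ≤ n - K₀ := by omega
      obtain ⟨hne, hdisj, hcard, href⟩ := ih hrle
      have hrlt : r < n - 1 := by omega
      obtain ⟨C, hC, C', hC', hCC', hmin, hQ⟩ := hstep r hrlt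
      obtain ⟨k₁, hk₁⟩ := href C hC
      obtain ⟨k₂, hk₂⟩ := href C' hC'
      have hsame : k₁ = k₂ := by
        by_contra hkk
        set f : Finset (Fin n) → Fin K₀ :=
          fun D => if h : ∃ k, D ⊆ G k then h.choose else ⟨0, hK₀⟩ with hf
        have hmaps : ∀ D ∈ P r, D ⊆ G (f D) := by
          intro D hD
          have h := href D hD
          simp only [hf, dif_pos h]
          exact h.choose_spec
        have hcardlt : (Finset.univ : Finset (Fin K₀)).card < (P r).card := by
          rw [hcard, card_univ, Fintype.card_fin]; omega
        obtain ⟨D, hD, D', hD', hDD', hfDD'⟩ :=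
          Finset.exists_ne_map_eq_of_card_lt_of_maps_to hcardlt
            (fun D _ => mem_univ (f D))
        have h1 : cLink d C C' ≤ cLink d D D' := hmin D hD D' hD' hDD'
        have h2 : cLink d D D' < cLink d C C' :=
          cLink_lt_cLink d hsep (hmaps D hD) (by rw [hfDD']; exact hmaps D' hD')
            (hne D hD) (hne D' hD') (hdisj D hD D' hD' hDD')
            hk₁ hk₂ hkk (hne C hC) (hne C' hC')
        exact absurd h1 (not_le.mpr h2)
      subst hsame
      have hunionsub : C ∪ C' ⊆ G k₁ := union_subset hk₁ hk₂
      have hEmem : ∀ D, D ∈ ((P r).erase C).erase C' ↔ (D ≠ C' ∧ D ≠ C ∧ D ∈ P r) := by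
        intro D; simp [Finset.mem_erase, and_assoc]
      have hnotmem : C ∪ C' ∉ ((P r).erase C).erase C' := by
        intro hmem
        obtain ⟨h1, h2, h3⟩ := (hEmem _).mp hmem
        have := hdisj C hC (C ∪ C') h3 (fun h => h2 h.symm)
        exact absurd (Finset.disjoint_left.mp this ((hne C hC).choose_spec)
          (mem_union_left _ (hne C hC).choose_spec)) (fun h => h)
      refine ⟨?_, ?_, ?_, ?_⟩
      · intro D hD
        rw [hQ, mem_insert] at hD
        rcases hD with rfl | hD
        · exact (hne C hC).mono subset_union_left
        · exact hne D ((hEmem _).mp hD).2.2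
      · intro D hD D' hD' hDD'
        rw [hQ, mem_insert] at hD hD'
        rcases hD with rfl | hD <;> rcases hD' with rfl | hD'
        · exact absurd rfl hDD'
        · obtain ⟨h1, h2, h3⟩ := (hEmem _).mp hD'
          exact Finset.disjoint_union_left.mpr
            ⟨(hdisj C hC D' h3 (fun h => h2 h.symm)),
             (hdisj C' hC' D' h3 (fun h => h1 h.symm))⟩
        · obtain ⟨h1, h2, h3⟩ := (hEmem _).mp hD
          exact (Finset.disjoint_union_left.mpr
            ⟨(hdisj C hC D h3 (fun h => h2 h.symm)),
             (hdisj C' hC' D h3 (fun h => h1 h.symm))⟩).symm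
        · exact hdisj D ((hEmem _).mp hD).2.2 D' ((hEmem _).mp hD').2.2 hDD'
      · have hC'e : C' ∈ (P r).erase C := mem_erase.mpr ⟨fun h => hCC' h.symm, hC'⟩
        rw [hQ, Finset.card_insert_of_notMem hnotmem,
          Finset.card_erase_of_mem hC'e, Finset.card_erase_of_mem hC, hcard]
        omega
      · intro D hD
        rw [hQ, mem_insert] at hD
        rcases hD with rfl | hD
        · exact ⟨k₁, hunionsub⟩
        · exact href D ((hEmem _).mp hD).2.2
  constructor
  · intro r hr1 hr2 C hC C' hC' hCC' heq
    have hCun : C ∪ C' ∈ P r := by rw [heq]; exact mem_insert_self _ _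
    obtain ⟨k, hk⟩ := (key r hr2).2.2.2 _ hCun
    exact ⟨k, subset_union_left.trans hk, subset_union_right.trans hk⟩
  · intro r hr
    exact (key r hr).2.2.2
end

section
/- Statement (17) of the paper: Under the hypotheses of Theorem 2 — fixed K₀ ≥ 1 and c₀ > 0; for each T an integer n(T) ≥ K₀, a partition {G₁^{(T)},…,G_{K₀}^{(T)}} of {1,…,n(T)} into K₀ nonempty groups, a random symmetric array d̂^{(T)} with probability measure P_T, h_max(T) > 0 with (log n(T)+log T)/(T·h_max(T)) → 0; property (8): for every ε > 0 there exists C with limsup_T P_T( max_{k} max_{i,j∈G_k^{(T)}, i≠j} d̂^{(T)}_{ij} > C·√(log n(T)+log T) ) ≤ ε; property (9): min_{k<k′} min_{i∈G_k^{(T)}, j∈G_{k′}^{(T)}} d̂^{(T)}_{ij} ≥ c₀·√(T·h_max(T)) + R_T with R_T/√(T·h_max(T)) → 0 in probability; and a deterministic sequence π_T with π_T/√(log n(T)+log T) → ∞ and π_T/√(T·h_max(T)) → 0 — it holds for every fixed integer K with 1 ≤ K < K₀ that P_T( max_{C ∈ P^{n(T)−K}(d̂^{(T)})} Δ(C) ≤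 π_T ) → 0 as T → ∞, where P^{n−K}(d) is the complete-linkage HAC partition into K clusters computed from d. -/
open Finset

/-- The thresholded dendrogram estimator of the number of groups:
`K̂₀(d,π) = min { K ∈ {1,…,n} : every cluster of the HAC partition into K clusters has
within-cluster dissimilarity at most π }`. -/
noncomputable def Khat {n : ℕ} (d : Fin n → Fin n → ℝ)
    (P : ℕ → Finset (Finset (Fin n))) (π : ℝ) : ℕ :=
  sInf {K : ℕ | 1 ≤ K ∧ K ≤ n ∧ ∀ C ∈ P (n - K), cDiam d C ≤ (π : EReal)}

/-- Maximal within-group distance `max_{k} max_{i,j ∈ G k, i ≠ j} d i j` (real-valued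
supremum; by Mathlib's convention it is `0` if there is no within-group pair). -/
noncomputable def withinMax {n K₀ : ℕ} (d : Fin n → Fin n → ℝ)
    (G : Fin K₀ → Finset (Fin n)) : ℝ :=
  sSup {x : ℝ | ∃ k, ∃ i ∈ G k, ∃ j ∈ G k, i ≠ j ∧ x = d i j}

/-- Minimal between-group distance `min_{k < k'} min_{i ∈ G k, j ∈ G k'} d i j`
(real-valued infimum). -/
noncomputable def betweenMin {n K₀ : ℕ} (d : Fin n → Fin n → ℝ)
    (G : Fin K₀ → Finset (Fin n)) : ℝ :=
  sInf {x : ℝ | ∃ k k' : Fin K₀, k ≠ k' ∧ ∃ i ∈ G k, ∃ j ∈ G k', x = d i j}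

def IsPart {n : ℕ} (P : Finset (Finset (Fin n))) : Prop :=
  (∀ C ∈ P, C.Nonempty) ∧ (∀ i : Fin n, ∃ C ∈ P, i ∈ C) ∧
    ∀ C ∈ P, ∀ C' ∈ P, C ≠ C' → Disjoint C C'

lemma isPart_singleton (n : ℕ) : IsPart (singletonPartition n) := by
  refine ⟨?_, ?_, ?_⟩
  · intro C hC
    simp only [singletonPartition, mem_image] at hC
    obtain ⟨i, -, rfl⟩ := hC
    exact ⟨i, mem_singleton_self i⟩
  · intro i
    exact ⟨{i}, by simp [singletonPartition], mem_singleton_self i⟩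
  · intro C hC C' hC' hne
    simp only [singletonPartition, mem_image] at hC hC'
    obtain ⟨i, -, rfl⟩ := hC
    obtain ⟨j, -, rfl⟩ := hC'
    simp only [ne_eq, Finset.singleton_inj] at hne
    simp [Finset.disjoint_singleton, hne, Ne.symm hne]

lemma card_singletonPartition (n : ℕ) : (singletonPartition n).card = n := by
  rw [singletonPartition, Finset.card_image_of_injective _ Finset.singleton_injective]
  simp

lemma merge_isPart {n : ℕ} {d : Fin n → Fin n → ℝ} {P Q : Finset (Finset (Fin n))}
    (hP : IsPart P) (h : IsMergeStep d P Q) : IsPart Q ∧ Q.card + 1 = P.card := by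
  obtain ⟨C, hC, C', hC', hne, -, rfl⟩ := h
  obtain ⟨hne', hcov, hdisj⟩ := hP
  have hsub : ∀ D ∈ (P.erase C).erase C', D ∈ P ∧ D ≠ C ∧ D ≠ C' := by
    intro D hD
    exact ⟨mem_of_mem_erase (mem_of_mem_erase hD),
      ne_of_mem_erase (mem_of_mem_erase hD), ne_of_mem_erase hD⟩
  have hCCnot : C ∪ C' ∉ (P.erase C).erase C' := by
    intro hmem
    obtain ⟨hmem', hne1, -⟩ := hsub _ hmem
    have := hdisj _ hC _ hmem' (Ne.symm hne1)
    obtain ⟨i, hi⟩ := hne' C hC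
    exact (Finset.disjoint_left.1 this hi) (Finset.mem_union_left _ hi)
  constructor
  · refine ⟨?_, ?_, ?_⟩
    · intro D hD
      rcases Finset.mem_insert.1 hD with rfl | hD
      · obtain ⟨i, hi⟩ := hne' C hC
        exact ⟨i, Finset.mem_union_left _ hi⟩
      · exact hne' _ (hsub _ hD).1
    · intro i
      obtain ⟨D, hD, hiD⟩ := hcov i
      by_cases h1 : D = C
      · exact ⟨C ∪ C', Finset.mem_insert_self _ _, Finset.mem_union_left _ (h1 ▸ hiD)⟩
      by_cases h2 : D = C'
      · exact ⟨C ∪ C', Finset.mem_insert_self _ _, Finset.mem_union_right _ (h2 ▸ hiD)⟩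
      · exact ⟨D, Finset.mem_insert_of_mem (Finset.mem_erase.2 ⟨h2, Finset.mem_erase.2 ⟨h1, hD⟩⟩), hiD⟩
    · intro D hD D' hD' hDD'
      rcases Finset.mem_insert.1 hD with rfl | hD <;> rcases Finset.mem_insert.1 hD' with h' | hD'
      · exact absurd h'.symm hDD'
      · obtain ⟨hm, h1, h2⟩ := hsub _ hD'
        exact Finset.disjoint_union_left.2 ⟨hdisj _ hC _ hm (Ne.symm h1), hdisj _ hC' _ hm (Ne.symm h2)⟩
      · subst h'
        obtain ⟨hm, h1, h2⟩ := hsub _ hD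
        exact Finset.disjoint_union_right.2 ⟨hdisj _ hm _ hC h1, hdisj _ hm _ hC' h2⟩
      · exact hdisj _ (hsub _ hD).1 _ (hsub _ hD').1 hDD'
  · rw [Finset.card_insert_of_notMem hCCnot,
      Finset.card_erase_of_mem (Finset.mem_erase.2 ⟨Ne.symm hne, hC'⟩),
      Finset.card_erase_of_mem hC]
    have h2 : 2 ≤ P.card := Finset.one_lt_card.2 ⟨C, hC, C', hC', hne⟩
    omega

lemma merge_exists {n : ℕ} (d : Fin n → Fin n → ℝ) {P : Finset (Finset (Fin n))}
    (h2 : 2 ≤ P.card) : ∃ Q, IsMergeStep d P Q := by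
  obtain ⟨C₀, hC₀, C₀', hC₀', hne₀⟩ := Finset.one_lt_card.1 h2
  set S := (P ×ˢ P).filter (fun p => p.1 ≠ p.2) with hS
  have hSne : S.Nonempty := ⟨(C₀, C₀'), by simp [hS, hC₀, hC₀', hne₀]⟩
  obtain ⟨p, hp, hmin⟩ := Finset.exists_min_image S (fun p => cLink d p.1 p.2) hSne
  simp only [hS, Finset.mem_filter, Finset.mem_product] at hp
  refine ⟨_, p.1, hp.1.1, p.2, hp.1.2, hp.2, ?_, rfl⟩
  intro D hD D' hD' hne
  exact hmin (D, D') (by simp [hS, hD, hD', hne])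

lemma chain_invariant {n : ℕ} {d : Fin n → Fin n → ℝ} {Q : ℕ → Finset (Finset (Fin n))}
    (hQ : IsHACChain d Q) : ∀ r, r ≤ n - 1 → IsPart (Q r) ∧ (Q r).card = n - r := by
  intro r
  induction r with
  | zero => intro _; rw [hQ.1]; exact ⟨isPart_singleton n, by simp [card_singletonPartition]⟩
  | succ r ih =>
    intro hr
    have hr' : r < n - 1 := by omega
    obtain ⟨hpart, hcard⟩ := ih (by omega)
    obtain ⟨hpart', hcard'⟩ := merge_isPart hpart (hQ.2 r hr')
    exact ⟨hpart', by omega⟩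

lemma chain_exists {n : ℕ} (d : Fin n → Fin n → ℝ) : ∃ Q, IsHACChain d Q := by
  classical
  let f : Finset (Finset (Fin n)) → Finset (Finset (Fin n)) := fun P =>
    if h : 2 ≤ P.card then Classical.choose (merge_exists d h) else P
  refine ⟨fun r => f^[r] (singletonPartition n), rfl, ?_⟩
  have key : ∀ r, r ≤ n - 1 → IsPart (f^[r] (singletonPartition n)) ∧
      (f^[r] (singletonPartition n)).card = n - r := by
    intro r
    induction r with
    | zero => intro _; exact ⟨isPart_singleton n, by simp [card_singletonPartition]⟩
    | succ r ih =>
      intro hr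
      obtain ⟨hpart, hcard⟩ := ih (by omega)
      have h2 : 2 ≤ (f^[r] (singletonPartition n)).card := by omega
      rw [Function.iterate_succ_apply']
      have hf : f (f^[r] (singletonPartition n)) = Classical.choose (merge_exists d h2) := by
        simp [f, h2]
      rw [hf]
      obtain ⟨hpart', hcard'⟩ := merge_isPart hpart (Classical.choose_spec (merge_exists d h2))
      exact ⟨hpart', by omega⟩
  intro r hr
  have h2 : 2 ≤ (f^[r] (singletonPartition n)).card := by
    rw [(key r (le_of_lt hr)).2]; omega
  have hf : f^[r + 1] (singletonPartition n) = Classical.choose (merge_exists d h2) := by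
    rw [Function.iterate_succ_apply']; simp [f, h2]
  show IsMergeStep d (f^[r] (singletonPartition n)) (f^[r + 1] (singletonPartition n))
  rw [hf]
  exact Classical.choose_spec (merge_exists d h2)

lemma key_det {n K₀ K : ℕ} (hK₀n : K₀ ≤ n) {d : Fin n → Fin n → ℝ}
    {G : Fin K₀ → Finset (Fin n)} (hG : IsGroupPartition G)
    (hK₁ : 1 ≤ K) (hK₂ : K < K₀) {π : ℝ}
    (h : ∀ Q, IsHACChain d Q → ∀ C ∈ Q (n - K), cDiam d C ≤ (π : EReal)) :
    betweenMin d G ≤ π := by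
  classical
  obtain ⟨Q, hQ⟩ := chain_exists d
  have hnK : n - K ≤ n - 1 := by omega
  obtain ⟨⟨-, hcov, -⟩, hcard⟩ := chain_invariant hQ (n - K) hnK
  have hcard' : (Q (n - K)).card = K := by omega
  -- representatives
  have hrep : ∀ k : Fin K₀, ∃ i, i ∈ G k := fun k => hG.1 k
  let x : Fin K₀ → Fin n := fun k => (hrep k).choose
  have hx : ∀ k, x k ∈ G k := fun k => (hrep k).choose_spec
  let f : Fin K₀ → Finset (Fin n) := fun k => (hcov (x k)).choose
  have hf1 : ∀ k, f k ∈ Q (n - K) := fun k => (hcov (x k)).choose_spec.1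
  have hf2 : ∀ k, x k ∈ f k := fun k => (hcov (x k)).choose_spec.2
  have hlt : (Q (n - K)).card < (Finset.univ : Finset (Fin K₀)).card := by
    simpa [hcard'] using hK₂
  obtain ⟨k₁, -, k₂, -, hk, hfeq⟩ :=
    Finset.exists_ne_map_eq_of_card_lt_of_maps_to hlt (fun k _ => hf1 k)
  have hij : x k₁ ≠ x k₂ := by
    intro heq
    exact (Finset.disjoint_left.1 (hG.2.2 k₁ k₂ hk) (hx k₁)) (heq ▸ hx k₂)
  have hmem : ((d (x k₁) (x k₂) : ℝ) : EReal) ∈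
      {y : EReal | ∃ i ∈ f k₁, ∃ j ∈ f k₁, i ≠ j ∧ y = (d i j : EReal)} :=
    ⟨x k₁, hf2 k₁, x k₂, hfeq ▸ hf2 k₂, hij, rfl⟩
  have hle : ((d (x k₁) (x k₂) : ℝ) : EReal) ≤ (π : EReal) :=
    le_trans (le_sSup hmem) (h Q hQ (f k₁) (hf1 k₁))
  have hle' : d (x k₁) (x k₂) ≤ π := EReal.coe_le_coe_iff.1 hle
  refine le_trans (csInf_le ?_ ⟨k₁, k₂, hk, x k₁, hx k₁, x k₂, hx k₂, rfl⟩) hle'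
  have hfin : {y : ℝ | ∃ k k' : Fin K₀, k ≠ k' ∧ ∃ i ∈ G k, ∃ j ∈ G k', y = d i j}.Finite := by
    apply (Set.finite_range (Function.uncurry d)).subset
    rintro y ⟨k, k', -, i, -, j, -, rfl⟩
    exact ⟨(i, j), rfl⟩
  exact hfin.bddBelow

open MeasureTheory Filter

/-- **Statement (17) of the paper.** Under the hypotheses of Theorem 2, for every fixed
`K` with `1 ≤ K < K₀`, the probability that every cluster of the HAC partition into `K`
clusters has within-cluster dissimilarity at most `π_T` tends to `0`. -/
theorem statement17_of_paper {K₀ : ℕ} (hK₀ : 1 ≤ K₀) (c₀ : ℝ) (hc₀ : 0 < c₀)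
    (n : ℕ → ℕ) (hn : ∀ T, K₀ ≤ n T)
    (Ω : ℕ → Type*) [∀ T, MeasurableSpace (Ω T)]
    (μ : ∀ T, Measure (Ω T)) [∀ T, IsProbabilityMeasure (μ T)]
    (dh : ∀ T, Ω T → Fin (n T) → Fin (n T) → ℝ)
    (hsym : ∀ T ω i j, dh T ω i j = dh T ω j i)
    (G : ∀ T, Fin K₀ → Finset (Fin (n T)))
    (hG : ∀ T, IsGroupPartition (G T))
    (hmax : ℕ → ℝ) (hhmax : ∀ T, 0 < hmax T)
    (hratio : Tendsto
      (fun T : ℕ => (Real.log (n T) + Real.log (T : ℝ)) / ((T : ℝ) * hmax T))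
      atTop (nhds 0))
    -- property (8): the within-group maximum is O_p(√(log n + log T))
    (h8 : ∀ ε : ℝ, 0 < ε → ∃ C : ℝ,
      Filter.limsup
        (fun T => μ T {ω |
          C * Real.sqrt (Real.log (n T) + Real.log (T : ℝ)) < withinMax (dh T ω) (G T)})
        atTop ≤ ENNReal.ofReal ε)
    -- property (9): the between-group minimum is ≥ c₀·√(T·h_max) + o_p(√(T·h_max))
    (h9 : 1 < K₀ → ∃ R : ∀ T, Ω T → ℝ,
      (∀ (T : ℕ) (ω : Ω T), c₀ * Real.sqrt ((T : ℝ) * hmax T) + R T ω ≤ betweenMin (dh T ω) (G T)) ∧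
        ∀ ε : ℝ, 0 < ε →
          Tendsto (fun T => μ T {ω | ε * Real.sqrt ((T : ℝ) * hmax T) < |R T ω|})
            atTop (nhds 0))
    -- property (10): √(log n + log T) ≪ π_T ≪ √(T·h_max)
    (π : ℕ → ℝ)
    (hπ1 : Tendsto
      (fun T => π T / Real.sqrt (Real.log (n T) + Real.log (T : ℝ))) atTop atTop)
    (hπ2 : Tendsto
      (fun T => π T / Real.sqrt ((T : ℝ) * hmax T)) atTop (nhds 0))
    (K : ℕ) (hK₁ : 1 ≤ K) (hK₂ : K < K₀) :
    Tendsto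
      (fun T => μ T {ω | ∀ Q, IsHACChain (dh T ω) Q →
        ∀ C ∈ Q (n T - K), cDiam (dh T ω) C ≤ ((π T : ℝ) : EReal)})
      atTop (nhds (0 : ENNReal)) := by
  classical
  have hK₀' : 1 < K₀ := lt_of_le_of_lt hK₁ hK₂
  obtain ⟨R, hR1, hR2⟩ := h9 hK₀'
  have hRtend := hR2 (c₀ / 4) (by positivity)
  have hev1 : ∀ᶠ T : ℕ in atTop, |π T / Real.sqrt ((T : ℝ) * hmax T)| < c₀ / 2 := by
    have h0 : Tendsto (fun T => |π T / Real.sqrt ((T : ℝ) * hmax T)|) atTop (nhds 0) := by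
      simpa using hπ2.abs
    exact h0.eventually (gt_mem_nhds (by positivity : (0:ℝ) < c₀ / 2))
  have hev2 : ∀ᶠ T : ℕ in atTop, 1 ≤ T := eventually_ge_atTop 1
  have hsub : ∀ᶠ T : ℕ in atTop,
      {ω : Ω T | ∀ Q, IsHACChain (dh T ω) Q →
        ∀ C ∈ Q (n T - K), cDiam (dh T ω) C ≤ ((π T : ℝ) : EReal)} ⊆
      {ω : Ω T | c₀ / 4 * Real.sqrt ((T : ℝ) * hmax T) < |R T ω|} := by
    filter_upwards [hev1, hev2] with T h1 h2
    intro ω hω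
    have hs : 0 < Real.sqrt ((T : ℝ) * hmax T) := by
      apply Real.sqrt_pos.2
      have : (1 : ℝ) ≤ (T : ℝ) := by exact_mod_cast h2
      nlinarith [hhmax T]
    have hbm : betweenMin (dh T ω) (G T) ≤ π T :=
      key_det (hn T) (hG T) hK₁ hK₂ hω
    have hπlt : π T < c₀ / 2 * Real.sqrt ((T : ℝ) * hmax T) := by
      rw [abs_div, abs_of_pos hs, div_lt_iff₀ hs] at h1
      calc π T ≤ |π T| := le_abs_self _
        _ < _ := h1
    have hRle : R T ω ≤ π T - c₀ * Real.sqrt ((T : ℝ) * hmax T) := by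
      have := hR1 T ω
      linarith
    show c₀ / 4 * Real.sqrt ((T : ℝ) * hmax T) < |R T ω|
    have hneg : c₀ / 2 * Real.sqrt ((T : ℝ) * hmax T) < -(R T ω) := by linarith
    have habs : -(R T ω) ≤ |R T ω| := neg_le_abs _
    nlinarith
  refine tendsto_of_tendsto_of_tendsto_of_le_of_le' tendsto_const_nhds hRtend ?_ ?_
  · exact Filter.Eventually.of_forall fun T => zero_le
  · filter_upwards [hsub] with T h
    exact measure_mono h
end
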